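/- Let (Ω, 𝓕, P) be a probability space with a filtration (𝓕_n)_{n ∈ ℕ}, and let Λ ≥ 0 be an integrable random variable measurable with respect to 𝓕_∞ := σ(⋃_n 𝓕_n). Then E[ |Λ − E[Λ | 𝓕_n]| | 𝓕_n ] → 0 almost surely as n → ∞. -/

import Mathlib

open MeasureTheory Filter

lemma stmt16_aux {α : Type*} [m : MeasurableSpace α] {f g : α → ℝ}
    (hf : Measurable f) (hg : Measurable g) : Measurable fun ω => |f ω - g ω| :=
  (hf.sub hg).abs

/-- Let `(ℱₙ)` be a filtration on a probability space `(Ω, 𝓕, P)` and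
let `Λ ≥ 0` be integrable and measurable with respect to `𝓕_∞ = σ(⋃ₙ ℱₙ)`. Then
`E[|Λ - E[Λ | ℱₙ]| | ℱₙ] → 0` almost surely as `n → ∞`. -/
theorem stmt16 (Ω : Type*) [m0 : MeasurableSpace Ω]
    (P : Measure Ω) [IsProbabilityMeasure P]
    (ℱ : Filtration ℕ m0) (Λ : Ω → ℝ)
    (hpos : 0 ≤ Λ) (hint : Integrable Λ P)
    (hmeas : Measurable[⨆ n, ℱ n] Λ) :
    ∀ᵐ ω ∂P, Tendsto
      (fun n => (P[fun ω' => |Λ ω' - (P[Λ | ℱ n]) ω'| | ℱ n]) ω)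
      atTop (nhds 0) := by
  have hle : (⨆ n, ℱ n) ≤ m0 := iSup_le fun n => ℱ.le n
  have hΛsm : StronglyMeasurable[⨆ n, ℱ n] Λ := hmeas.stronglyMeasurable
  -- Lévy's upward theorem for Λ
  have h0 := hint.tendsto_ae_condExp hΛsm
  -- the family f m = |Λ - E[Λ|ℱ m]|
  set f : ℕ → Ω → ℝ := fun m ω => |Λ ω - (P[Λ | ℱ m]) ω| with hfdef
  have hfint : ∀ m, Integrable (f m) P := fun m => (hint.sub integrable_condExp).abs
  have hfsm : ∀ m, StronglyMeasurable[⨆ n, ℱ n] (f m) := by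
    intro m
    have h1 : Measurable[⨆ n, ℱ n] fun ω => (P[Λ | ℱ m]) ω :=
      (stronglyMeasurable_condExp.measurable).mono
        (le_iSup (fun n => (ℱ n : MeasurableSpace Ω)) m) le_rfl
    exact (stmt16_aux (m := ⨆ n, ℱ n) hmeas h1).stronglyMeasurable
  -- Lévy's upward theorem for each f m
  have h1 : ∀ m, ∀ᵐ ω ∂P, Tendsto (fun n => (P[f m | ℱ n]) ω) atTop (nhds (f m ω)) :=
    fun m => (hfint m).tendsto_ae_condExp (hfsm m)
  -- key inequality
  have key : ∀ m n, m ≤ n →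
      (P[f n | ℱ n]) ≤ᵐ[P]
        (P[f m | ℱ n]) + fun ω => |(P[Λ | ℱ m]) ω - (P[Λ | ℱ n]) ω| := by
    intro m n hmn
    set g : Ω → ℝ := fun ω => |(P[Λ | ℱ m]) ω - (P[Λ | ℱ n]) ω| with hgdef
    have hgint : Integrable g P := (integrable_condExp.sub integrable_condExp).abs
    have hgsm : StronglyMeasurable[ℱ n] g := by
      have h1 : Measurable[ℱ n] fun ω => (P[Λ | ℱ m]) ω :=
        (stronglyMeasurable_condExp.measurable).mono (ℱ.mono hmn) le_rfl
      exact (stmt16_aux (m := (ℱ n : MeasurableSpace Ω)) h1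
        stronglyMeasurable_condExp.measurable).stronglyMeasurable
    have hpt : f n ≤ᵐ[P] f m + g :=
      Filter.Eventually.of_forall fun ω => by
        simpa using abs_sub_le (Λ ω) ((P[Λ | ℱ m]) ω) ((P[Λ | ℱ n]) ω)
    calc (P[f n | ℱ n]) ≤ᵐ[P] P[f m + g | ℱ n] :=
          condExp_mono (hfint n) ((hfint m).add hgint) hpt
      _ =ᵐ[P] (P[f m | ℱ n]) + (P[g | ℱ n]) := condExp_add (hfint m) hgint _
      _ =ᵐ[P] (P[f m | ℱ n]) + g := by
          rw [condExp_of_stronglyMeasurable (ℱ.le n) hgsm hgint]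
  have hnn : ∀ n, 0 ≤ᵐ[P] (P[f n | ℱ n]) := fun n =>
    condExp_nonneg (Filter.Eventually.of_forall fun ω => abs_nonneg _)
  have key' : ∀ᵐ ω ∂P, ∀ m n, m ≤ n →
      (P[f n | ℱ n]) ω ≤ (P[f m | ℱ n]) ω + |(P[Λ | ℱ m]) ω - (P[Λ | ℱ n]) ω| := by
    rw [ae_all_iff]
    intro m
    rw [ae_all_iff]
    intro n
    by_cases h : m ≤ n
    · exact (key m n h).mono fun ω hω _ => hω
    · exact Filter.Eventually.of_forall fun ω h' => absurd h' h
  have hnn' : ∀ᵐ ω ∂P, ∀ n, 0 ≤ (P[f n | ℱ n]) ω := ae_all_iff.2 hnn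
  have h1' : ∀ᵐ ω ∂P, ∀ m, Tendsto (fun n => (P[f m | ℱ n]) ω) atTop (nhds (f m ω)) :=
    ae_all_iff.2 h1
  filter_upwards [h0, h1', key', hnn'] with ω hω0 hω1 hω2 hω3
  show Tendsto (fun n => (P[f n | ℱ n]) ω) atTop (nhds 0)
  rw [NormedAddCommGroup.tendsto_nhds_zero]
  intro ε hε
  -- f m ω → 0 as m → ∞
  have hf0 : Tendsto (fun m => f m ω) atTop (nhds 0) := by
    have h := (tendsto_const_nhds (x := Λ ω) (f := atTop (α := ℕ))).sub hω0
    simpa using h.abs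
  obtain ⟨m, hm⟩ := (hf0.eventually_lt_const (show (0:ℝ) < ε / 2 by linarith)).exists
  have hA : ∀ᶠ n in atTop, (P[f m | ℱ n]) ω < ε / 2 :=
    Tendsto.eventually_lt_const hm (hω1 m)
  have hB : ∀ᶠ n in atTop, |(P[Λ | ℱ m]) ω - (P[Λ | ℱ n]) ω| < ε / 2 := by
    have ht : Tendsto (fun n => |(P[Λ | ℱ m]) ω - (P[Λ | ℱ n]) ω|) atTop
        (nhds |(P[Λ | ℱ m]) ω - Λ ω|) := (tendsto_const_nhds.sub hω0).abs
    have : |(P[Λ | ℱ m]) ω - Λ ω| < ε / 2 := by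
      rw [abs_sub_comm]; exact hm
    exact ht.eventually_lt_const this
  filter_upwards [hA, hB, eventually_ge_atTop m] with n hn1 hn2 hn3
  have := hω2 m n hn3
  rw [Real.norm_eq_abs, abs_of_nonneg (hω3 n)]
  linarith
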